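/- Suppose a differentiable function s : [τ, T) → ℝ satisfies s(t) > 0 and s'(t) > 2 s(t)^{3/2} for all t in [τ, T). Then for all t in (τ, T), s(t)^{-1/2} < s(τ)^{-1/2} - (t - τ); in particular T ≤ τ + s(τ)^{-1/2}. -/

import Mathlib

open Set

theorem blowup_from_differential_inequality
    (s : ℝ → ℝ) (τ T : ℝ) (hτT : τ < T)
    (hdiff : ∀ t ∈ Ico τ T, DifferentiableAt ℝ s t)
    (hpos : ∀ t ∈ Ico τ T, 0 < s t)
    (hineq : ∀ t ∈ Ico τ T, deriv s t > 2 * (s t) ^ ((3 : ℝ) / 2)) :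
    (∀ t ∈ Ioo τ T, (s t) ^ (-(1 : ℝ) / 2) < (s τ) ^ (-(1 : ℝ) / 2) - (t - τ)) ∧
    T ≤ τ + (s τ) ^ (-(1 : ℝ) / 2) := by
  set g : ℝ → ℝ := fun t => (s t) ^ (-(1 : ℝ) / 2) + (t - τ) with hg_def
  have hgderiv : ∀ x ∈ Ico τ T, HasDerivAt g
      (deriv s x * (-(1 : ℝ) / 2) * s x ^ (-(1 : ℝ) / 2 - 1) + 1) x := by
    intro x hx
    have h1 : HasDerivAt (fun y => (s y) ^ (-(1 : ℝ) / 2))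
        (deriv s x * (-(1 : ℝ) / 2) * s x ^ (-(1 : ℝ) / 2 - 1)) x :=
      ((hdiff x hx).hasDerivAt).rpow_const (Or.inl (hpos x hx).ne')
    exact h1.add ((hasDerivAt_id x).sub_const τ)
  have hanti : StrictAntiOn g (Ico τ T) := by
    apply StrictAntiOn.mono (s := Ico τ T) ?_ (le_refl _)
    apply strictAntiOn_of_deriv_neg (convex_Ico τ T)
    · intro x hx
      exact ((hgderiv x hx).differentiableAt.continuousAt).continuousWithinAt
    · intro x hx
      rw [interior_Ico] at hx
      have hx' : x ∈ Ico τ T := Ioo_subset_Ico_self hx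
      rw [(hgderiv x hx').deriv]
      have hb := hpos x hx'
      have hbinv : (0:ℝ) < s x ^ (-(3:ℝ)/2) := Real.rpow_pos_of_pos hb _
      have key : deriv s x * s x ^ (-(3:ℝ)/2) > 2 := by
        have h := mul_lt_mul_of_pos_right (hineq x hx') hbinv
        have hone : s x ^ ((3:ℝ)/2) * s x ^ (-(3:ℝ)/2) = 1 := by
          rw [← Real.rpow_add hb]; norm_num
        calc (2:ℝ) = 2 * (s x ^ ((3:ℝ)/2) * s x ^ (-(3:ℝ)/2)) := by rw [hone]; ring
          _ = 2 * s x ^ ((3:ℝ)/2) * s x ^ (-(3:ℝ)/2) := by ring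
          _ < deriv s x * s x ^ (-(3:ℝ)/2) := h
      have hexp : (-(1:ℝ)/2 - 1) = -(3:ℝ)/2 := by norm_num
      rw [hexp]
      nlinarith [key]
  have hmain : ∀ t ∈ Ioo τ T, (s t) ^ (-(1 : ℝ) / 2) < (s τ) ^ (-(1 : ℝ) / 2) - (t - τ) := by
    intro t ht
    have hτmem : τ ∈ Ico τ T := ⟨le_refl _, hτT⟩
    have htmem : t ∈ Ico τ T := Ioo_subset_Ico_self ht
    have := hanti hτmem htmem ht.1
    simp only [hg_def] at this
    have : s t ^ (-(1:ℝ)/2) + (t - τ) < s τ ^ (-(1:ℝ)/2) := by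
      simpa using this
    linarith
  refine ⟨hmain, ?_⟩
  by_contra h
  push_neg at h
  set c := (s τ) ^ (-(1 : ℝ) / 2) with hc
  have hcpos : 0 < c := Real.rpow_pos_of_pos (hpos τ ⟨le_refl _, hτT⟩) _
  have ht : τ + c ∈ Ioo τ T := ⟨by linarith, h⟩
  have h1 := hmain _ ht
  have h2 : 0 < s (τ + c) ^ (-(1:ℝ)/2) :=
    Real.rpow_pos_of_pos (hpos _ (Ioo_subset_Ico_self ht)) _
  have : c - (τ + c - τ) = 0 := by ring
  linarith [this ▸ h1]
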